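/- Define the 2×2 matrix-valued function N̂₁(z) = [[1,0],[−2β,1]] · (1/√2)·diag(z^{−1/4}, z^{1/4}) · [[1,i],[i,1]] · diag(d₁(z), d₂(z)) for z ∈ ℂ ∖ (−∞,0], with principal branches of z^{±1/4}. Then: (a) N̂₁ is analytic in ℂ ∖ (−∞,0]; (b) for every x < −1 the boundary values satisfy N̂₁,₊(x) = N̂₁,₋(x)·[[0,1],[−1,0]], and for every x with −1 < x < 0 they satisfy N̂₁,₊(x) = N̂₁,₋(x)·[[0, 1−γ],[1/(γ−1), 0]]; (c) as z → ∞ in ℂ ∖ (−∞,0], √2·N̂₁(z)·([[1,i],[i,1]])^{−1}·diag(z^{1/4}, z^{−1/4}) = I + O(z^{−1}). -/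

import Mathlib

open Complex Filter Topology Set Asymptotics Matrix

/-- `β = ln(1-γ)/(2πi)`. -/
noncomputable def beta (γ : ℝ) : ℂ := Complex.log (1 - γ) / (2 * Real.pi * Complex.I)

/-- `λ(ζ) = ((ζ-i)/(ζ+i))^β`, principal branch. -/
noncomputable def lam (γ : ℝ) (ζ : ℂ) : ℂ := ((ζ - Complex.I) / (ζ + Complex.I)) ^ (beta γ)

/-- `d₁(z) = λ(z^{1/2})`, principal branch of the square root. -/
noncomputable def d1 (γ : ℝ) (z : ℂ) : ℂ := lam γ (z ^ ((1 : ℂ)/2))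

/-- `d₂(z) = λ(-z^{1/2})`, principal branch of the square root. -/
noncomputable def d2 (γ : ℝ) (z : ℂ) : ℂ := lam γ (-(z ^ ((1 : ℂ)/2)))

/-- `ℂ ∖ (-∞,0]`. -/
def slitPlane0 : Set ℂ := {z : ℂ | ¬(z.re ≤ 0 ∧ z.im = 0)}

/-- `N̂₁(z) = [[1,0],[-2β,1]] · (1/√2)·diag(z^{-1/4}, z^{1/4}) · [[1,i],[i,1]] · diag(d₁(z), d₂(z))`. -/
noncomputable def Nhat1 (γ : ℝ) (z : ℂ) : Matrix (Fin 2) (Fin 2) ℂ :=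
  !![1, 0; -2 * beta γ, 1] *
    (((1 : ℂ) / Real.sqrt 2) • Matrix.diagonal ![z ^ (-(1:ℂ)/4), z ^ ((1:ℂ)/4)]) *
    !![1, Complex.I; Complex.I, 1] *
    Matrix.diagonal ![d1 γ z, d2 γ z]


lemma slit0_iff {z : ℂ} : z ∈ slitPlane0 ↔ z ∈ Complex.slitPlane := by
  simp only [slitPlane0, Complex.mem_slitPlane_iff, Set.mem_setOf_eq]
  push_neg
  constructor
  · intro h; rcases lt_or_ge 0 z.re with h1 | h1
    · exact Or.inl h1
    · exact Or.inr (h h1)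
  · rintro (h|h) h1 <;> [exact absurd h1 (not_le.2 h); exact h]

lemma isOpen_slit0 : IsOpen slitPlane0 := by
  have : slitPlane0 = Complex.slitPlane := Set.ext fun z => slit0_iff
  rw [this]; exact Complex.isOpen_slitPlane

lemma ne_zero_of_slit0 {z : ℂ} (hz : z ∈ slitPlane0) : z ≠ 0 := by
  rw [slit0_iff] at hz; exact Complex.slitPlane_ne_zero hz

lemma re_sqrt_pos {z : ℂ} (hz : z ∈ slitPlane0) : 0 < (z ^ ((1:ℂ)/2)).re := by
  have hz0 : z ≠ 0 := ne_zero_of_slit0 hz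
  rw [Complex.cpow_def_of_ne_zero hz0, Complex.exp_re]
  have harg : |z.arg| < Real.pi := by
    rw [abs_lt]
    refine ⟨Complex.neg_pi_lt_arg z, lt_of_le_of_ne (Complex.arg_le_pi z) ?_⟩
    intro h
    rw [Complex.arg_eq_pi_iff] at h
    exact hz ⟨le_of_lt h.1, h.2⟩
  have him : (Complex.log z * ((1:ℂ)/2)).im = z.arg / 2 := by
    simp [Complex.log_im]
    ring
  rw [him]
  have : 0 < Real.cos (z.arg / 2) := by
    apply Real.cos_pos_of_mem_Ioo
    constructor
    · rw [abs_lt] at harg; linarith [harg.1]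
    · rw [abs_lt] at harg; linarith [harg.2]
  positivity

lemma im_moebius {w : ℂ} : ((w - I)/(w + I)).im
    = -2 * w.re / Complex.normSq (w + I) := by
  rw [Complex.div_im]
  simp only [Complex.sub_im, Complex.sub_re, Complex.add_im, Complex.add_re,
    Complex.I_im, Complex.I_re, sub_zero, add_zero]
  ring

lemma im_q_neg {w : ℂ} (hw : 0 < w.re) : ((w - I)/(w + I)).im < 0 := by
  rw [im_moebius]
  have h1 : 0 < Complex.normSq (w + I) := by
    rw [Complex.normSq_pos]
    intro h
    have := congrArg Complex.re h
    simp at this; linarith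
  have h2 : -2 * w.re < 0 := by linarith
  exact div_neg_of_neg_of_pos h2 h1

lemma im_q_pos {w : ℂ} (hw : w.re < 0) : ((w - I)/(w + I)).im > 0 := by
  rw [im_moebius]
  have h1 : 0 < Complex.normSq (w + I) := by
    rw [Complex.normSq_pos]
    intro h
    have := congrArg Complex.re h
    simp at this; linarith
  have h2 : 0 < -2 * w.re := by linarith
  exact div_pos h2 h1


lemma analytic_cpow (c : ℂ) : AnalyticOnNhd ℂ (fun z : ℂ => z ^ c) slitPlane0 := by
  intro z hz
  exact analyticAt_id.cpow analyticAt_const (slit0_iff.1 hz)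

lemma analytic_d1 (γ : ℝ) : AnalyticOnNhd ℂ (d1 γ) slitPlane0 := by
  intro z hz
  have hw : AnalyticAt ℂ (fun z : ℂ => z ^ ((1:ℂ)/2)) z := analytic_cpow _ z hz
  have hre := re_sqrt_pos hz
  have hden : (z ^ ((1:ℂ)/2) + I) ≠ 0 := by
    intro h
    have := congrArg Complex.re h
    simp at this; linarith
  have hq : AnalyticAt ℂ (fun z : ℂ => (z ^ ((1:ℂ)/2) - I) / (z ^ ((1:ℂ)/2) + I)) z :=
    (hw.sub analyticAt_const).div (hw.add analyticAt_const) hden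
  have hmem : (z ^ ((1:ℂ)/2) - I) / (z ^ ((1:ℂ)/2) + I) ∈ Complex.slitPlane := by
    rw [Complex.mem_slitPlane_iff]
    exact Or.inr (ne_of_lt (im_q_neg hre))
  exact hq.cpow analyticAt_const hmem

lemma analytic_d2 (γ : ℝ) : AnalyticOnNhd ℂ (d2 γ) slitPlane0 := by
  intro z hz
  have hw : AnalyticAt ℂ (fun z : ℂ => -(z ^ ((1:ℂ)/2))) z := (analytic_cpow _ z hz).neg
  have hre := re_sqrt_pos hz
  have hden : (-(z ^ ((1:ℂ)/2)) + I) ≠ 0 := by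
    intro h
    have := congrArg Complex.re h
    simp at this; linarith
  have hq : AnalyticAt ℂ (fun z : ℂ => (-(z ^ ((1:ℂ)/2)) - I) / (-(z ^ ((1:ℂ)/2)) + I)) z :=
    (hw.sub analyticAt_const).div (hw.add analyticAt_const) hden
  have hmem : (-(z ^ ((1:ℂ)/2)) - I) / (-(z ^ ((1:ℂ)/2)) + I) ∈ Complex.slitPlane := by
    rw [Complex.mem_slitPlane_iff]
    refine Or.inr (ne_of_gt (im_q_pos ?_))
    rw [Complex.neg_re]
    linarith
  exact hq.cpow analyticAt_const hmem

lemma Nhat1_eq (γ : ℝ) (z : ℂ) : Nhat1 γ z =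
    ((1 : ℂ) / Real.sqrt 2) •
      !![z ^ (-(1:ℂ)/4) * d1 γ z, Complex.I * z ^ (-(1:ℂ)/4) * d2 γ z;
        (Complex.I * z ^ ((1:ℂ)/4) - 2 * beta γ * z ^ (-(1:ℂ)/4)) * d1 γ z,
        (z ^ ((1:ℂ)/4) - 2 * Complex.I * beta γ * z ^ (-(1:ℂ)/4)) * d2 γ z] := by
  ext i j
  fin_cases i <;> fin_cases j <;>
    simp [Nhat1, Matrix.mul_apply, Fin.sum_univ_two, Matrix.diagonal_apply,
      Matrix.smul_apply, Pi.smul_apply, smul_eq_mul, Matrix.vecMul, Matrix.vecHead,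
      Matrix.vecTail, dotProduct, Function.comp] <;> ring

lemma tendsto_log_boundary_pos {α : Type*} {l : Filter α} {f : α → ℂ} {x : ℝ} (hx : x < 0)
    (hf : Tendsto f l (𝓝 (x:ℂ))) (him : ∀ᶠ a in l, 0 < (f a).im) :
    Tendsto (fun a => Complex.log (f a)) l (𝓝 (Real.log (-x) + Real.pi * I)) := by
  have h1 : Tendsto Complex.log (𝓝[{z : ℂ | 0 ≤ z.im}] (x:ℂ))
      (𝓝 (Real.log ‖(x:ℂ)‖ + Real.pi * I)) :=
    Complex.tendsto_log_nhdsWithin_im_nonneg_of_re_neg_of_im_zero (by simpa using hx) (by simp)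
  have habs : ‖(x:ℂ)‖ = -x := by
    rw [Complex.norm_real, Real.norm_eq_abs, abs_of_neg hx]
  rw [habs] at h1
  refine h1.comp ?_
  rw [tendsto_nhdsWithin_iff]
  exact ⟨hf, him.mono fun a ha => le_of_lt ha⟩

lemma tendsto_log_boundary_neg {α : Type*} {l : Filter α} {f : α → ℂ} {x : ℝ} (hx : x < 0)
    (hf : Tendsto f l (𝓝 (x:ℂ))) (him : ∀ᶠ a in l, (f a).im < 0) :
    Tendsto (fun a => Complex.log (f a)) l (𝓝 (Real.log (-x) - Real.pi * I)) := by
  have h1 : Tendsto Complex.log (𝓝[{z : ℂ | z.im < 0}] (x:ℂ))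
      (𝓝 (Real.log ‖(x:ℂ)‖ - Real.pi * I)) :=
    Complex.tendsto_log_nhdsWithin_im_neg_of_re_neg_of_im_zero (by simpa using hx) (by simp)
  have habs : ‖(x:ℂ)‖ = -x := by
    rw [Complex.norm_real, Real.norm_eq_abs, abs_of_neg hx]
  rw [habs] at h1
  refine h1.comp ?_
  rw [tendsto_nhdsWithin_iff]
  exact ⟨hf, him⟩

lemma tendsto_cpow_boundary_pos {α : Type*} {l : Filter α} {f : α → ℂ} {x : ℝ} (hx : x < 0)
    (c : ℂ) (hf : Tendsto f l (𝓝 (x:ℂ))) (him : ∀ᶠ a in l, 0 < (f a).im) :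
    Tendsto (fun a => f a ^ c) l (𝓝 (Complex.exp ((Real.log (-x) + Real.pi * I) * c))) := by
  have hlog := tendsto_log_boundary_pos hx hf him
  have h2 : Tendsto (fun a => Complex.exp (Complex.log (f a) * c)) l
      (𝓝 (Complex.exp ((Real.log (-x) + Real.pi * I) * c))) :=
    (Complex.continuous_exp.tendsto _).comp (hlog.mul_const c)
  refine h2.congr' ?_
  filter_upwards [him] with a ha
  rw [Complex.cpow_def_of_ne_zero]
  intro h0
  rw [h0] at ha; simp at ha

lemma tendsto_cpow_boundary_neg {α : Type*} {l : Filter α} {f : α → ℂ} {x : ℝ} (hx : x < 0)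
    (c : ℂ) (hf : Tendsto f l (𝓝 (x:ℂ))) (him : ∀ᶠ a in l, (f a).im < 0) :
    Tendsto (fun a => f a ^ c) l (𝓝 (Complex.exp ((Real.log (-x) - Real.pi * I) * c))) := by
  have hlog := tendsto_log_boundary_neg hx hf him
  have h2 : Tendsto (fun a => Complex.exp (Complex.log (f a) * c)) l
      (𝓝 (Complex.exp ((Real.log (-x) - Real.pi * I) * c))) :=
    (Complex.continuous_exp.tendsto _).comp (hlog.mul_const c)
  refine h2.congr' ?_
  filter_upwards [him] with a ha
  rw [Complex.cpow_def_of_ne_zero]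
  intro h0
  rw [h0] at ha; simp at ha

lemma d1_eq (γ : ℝ) (z : ℂ) :
    d1 γ z = ((z ^ ((1:ℂ)/2) - I) / (z ^ ((1:ℂ)/2) + I)) ^ beta γ := rfl

lemma d2_eq (γ : ℝ) (z : ℂ) :
    d2 γ z = ((-(z ^ ((1:ℂ)/2)) - I) / (-(z ^ ((1:ℂ)/2)) + I)) ^ beta γ := rfl

lemma Nhat1_tendsto_entrywise {γ : ℝ} {l : Filter ℝ} {g : ℝ → ℂ} {A B D E : ℂ}
    (hA : Tendsto (fun ε => g ε ^ (-(1:ℂ)/4)) l (𝓝 A))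
    (hB : Tendsto (fun ε => g ε ^ ((1:ℂ)/4)) l (𝓝 B))
    (hD : Tendsto (fun ε => d1 γ (g ε)) l (𝓝 D))
    (hE : Tendsto (fun ε => d2 γ (g ε)) l (𝓝 E)) :
    Tendsto (fun ε => Nhat1 γ (g ε)) l
      (𝓝 (((1:ℂ)/Real.sqrt 2) •
        !![A*D, I*A*E; (I*B - 2*beta γ*A)*D, (B - 2*I*beta γ*A)*E])) := by
  simp only [Nhat1_eq]
  have key : Tendsto (fun ε =>
      !![g ε ^ (-(1:ℂ)/4) * d1 γ (g ε), I * g ε ^ (-(1:ℂ)/4) * d2 γ (g ε);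
        (I * g ε ^ ((1:ℂ)/4) - 2 * beta γ * g ε ^ (-(1:ℂ)/4)) * d1 γ (g ε),
        (g ε ^ ((1:ℂ)/4) - 2 * I * beta γ * g ε ^ (-(1:ℂ)/4)) * d2 γ (g ε)]) l
      (𝓝 !![A*D, I*A*E; (I*B - 2*beta γ*A)*D, (B - 2*I*beta γ*A)*E]) := by
    apply tendsto_pi_nhds.2
    intro i
    rw [tendsto_pi_nhds]
    intro j
    fin_cases i <;> fin_cases j <;> simp only [Matrix.cons_val', Matrix.cons_val_zero,
      Matrix.cons_val_one, Matrix.head_cons, Matrix.head_fin_const, Matrix.empty_val',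
      Matrix.cons_val_fin_one, Fin.zero_eta, Fin.mk_one]
    · exact hA.mul hD
    · exact ((tendsto_const_nhds.mul hA).mul hE :)
    · exact (((tendsto_const_nhds.mul hB).sub (tendsto_const_nhds.mul hA)).mul hD :)
    · exact ((hB.sub (tendsto_const_nhds.mul hA)).mul hE :)
  exact key.const_smul _

section paths
variable {x : ℝ}

lemma tendsto_zp (x : ℝ) : Tendsto (fun ε : ℝ => (x:ℂ) + ε * I) (𝓝[>] 0) (𝓝 (x:ℂ)) := by
  have h : Tendsto (fun ε : ℝ => (x:ℂ) + ε * I) (𝓝 0) (𝓝 ((x:ℂ) + (0:ℝ) * I)) :=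
    tendsto_const_nhds.add ((Complex.continuous_ofReal.tendsto 0).mul_const I)
  simp only [Complex.ofReal_zero, zero_mul, add_zero] at h
  exact h.mono_left nhdsWithin_le_nhds

lemma tendsto_zm (x : ℝ) : Tendsto (fun ε : ℝ => (x:ℂ) - ε * I) (𝓝[>] 0) (𝓝 (x:ℂ)) := by
  have h : Tendsto (fun ε : ℝ => (x:ℂ) - ε * I) (𝓝 0) (𝓝 ((x:ℂ) - (0:ℝ) * I)) :=
    tendsto_const_nhds.sub ((Complex.continuous_ofReal.tendsto 0).mul_const I)
  simp only [Complex.ofReal_zero, zero_mul, sub_zero] at h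
  exact h.mono_left nhdsWithin_le_nhds

lemma im_zp_pos : ∀ᶠ ε : ℝ in 𝓝[>] 0, 0 < ((x:ℂ) + ε * I).im := by
  filter_upwards [self_mem_nhdsWithin] with ε (hε : 0 < ε)
  simpa using hε

lemma im_zm_neg : ∀ᶠ ε : ℝ in 𝓝[>] 0, ((x:ℂ) - ε * I).im < 0 := by
  filter_upwards [self_mem_nhdsWithin] with ε (hε : 0 < ε)
  simpa using hε

lemma zp_slit : ∀ᶠ ε : ℝ in 𝓝[>] 0, ((x:ℂ) + ε * I) ∈ slitPlane0 := by
  filter_upwards [im_zp_pos (x := x)] with ε hε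
  intro h
  rw [h.2] at hε; exact lt_irrefl 0 hε

lemma zm_slit : ∀ᶠ ε : ℝ in 𝓝[>] 0, ((x:ℂ) - ε * I) ∈ slitPlane0 := by
  filter_upwards [im_zm_neg (x := x)] with ε hε
  intro h
  rw [h.2] at hε; exact lt_irrefl 0 hε

lemma tendsto_zp_cpow (hx : x < 0) (c : ℂ) :
    Tendsto (fun ε : ℝ => ((x:ℂ) + ε * I) ^ c) (𝓝[>] 0)
      (𝓝 (Complex.exp ((Real.log (-x) + Real.pi * I) * c))) :=
  tendsto_cpow_boundary_pos hx c (tendsto_zp x) im_zp_pos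

lemma tendsto_zm_cpow (hx : x < 0) (c : ℂ) :
    Tendsto (fun ε : ℝ => ((x:ℂ) - ε * I) ^ c) (𝓝[>] 0)
      (𝓝 (Complex.exp ((Real.log (-x) - Real.pi * I) * c))) :=
  tendsto_cpow_boundary_neg hx c (tendsto_zm x) im_zm_neg

lemma exp_half_pi_I : Complex.exp ((Real.pi : ℂ) / 2 * I) = I := by
  rw [Complex.exp_mul_I]
  have h1 : ((Real.pi : ℂ) / 2) = ((Real.pi / 2 : ℝ) : ℂ) := by push_cast; ring
  rw [h1, ← Complex.ofReal_cos, ← Complex.ofReal_sin, Real.cos_pi_div_two, Real.sin_pi_div_two]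
  simp

lemma W_plus (hx : x < 0) :
    Complex.exp ((Real.log (-x) + Real.pi * I) * ((1:ℂ)/2)) = Real.sqrt (-x) * I := by
  have hsq : Real.exp (Real.log (-x) / 2) = Real.sqrt (-x) := by
    have h2 : Real.exp (Real.log (-x) / 2) ^ 2 = -x := by
      rw [sq, ← Real.exp_add]
      rw [show Real.log (-x) / 2 + Real.log (-x) / 2 = Real.log (-x) by ring]
      exact Real.exp_log (by linarith)
    calc Real.exp (Real.log (-x) / 2)
        = Real.sqrt (Real.exp (Real.log (-x) / 2) ^ 2) :=
          (Real.sqrt_sq (le_of_lt (Real.exp_pos _))).symm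
      _ = Real.sqrt (-x) := by rw [h2]
  have : (Real.log (-x) + Real.pi * I) * ((1:ℂ)/2)
      = ((Real.log (-x) / 2 : ℝ) : ℂ) + (Real.pi : ℂ)/2 * I := by push_cast; ring
  rw [this, Complex.exp_add, exp_half_pi_I, ← Complex.ofReal_exp, hsq]

lemma W_minus (hx : x < 0) :
    Complex.exp ((Real.log (-x) - Real.pi * I) * ((1:ℂ)/2)) = -(Real.sqrt (-x) * I) := by
  have h := W_plus hx
  have hdiff : (Real.log (-x) - Real.pi * I) * ((1:ℂ)/2)
      = (Real.log (-x) + Real.pi * I) * ((1:ℂ)/2) + (-(Real.pi * I)) := by ring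
  rw [hdiff, Complex.exp_add, h, Complex.exp_neg, Complex.exp_pi_mul_I]
  field_simp

end paths

section qpaths
variable {x : ℝ}

lemma val_t {sr : ℝ} (h : 0 ≤ sr) :
    ((sr:ℂ) * I - I) / ((sr:ℂ) * I + I) = (((sr - 1)/(sr + 1) : ℝ) : ℂ) := by
  have h1 : (sr:ℂ) * I + I ≠ 0 := by
    intro hc
    have := congrArg Complex.im hc
    simp at this
    linarith
  have h2 : ((sr:ℂ) + 1) ≠ 0 := by
    intro hc
    have := congrArg Complex.re hc
    simp at this
    linarith
  push_cast
  rw [div_eq_div_iff h1 h2]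
  ring

lemma val_s {sr : ℝ} (h : sr ≠ 1) :
    (-((sr:ℂ) * I) - I) / (-((sr:ℂ) * I) + I) = (((sr + 1)/(sr - 1) : ℝ) : ℂ) := by
  have h1 : -((sr:ℂ) * I) + I ≠ 0 := by
    intro hc
    have := congrArg Complex.im hc
    simp at this
    exact h (by linarith)
  have h2 : ((sr:ℂ) - 1) ≠ 0 := by
    intro hc
    have := congrArg Complex.re hc
    simp at this
    exact h (by linarith)
  push_cast
  rw [div_eq_div_iff h1 h2]
  ring

lemma tendsto_q1p (hx : x < 0) :
    Tendsto (fun ε : ℝ => ((((x:ℂ) + ε*I) ^ ((1:ℂ)/2)) - I) / ((((x:ℂ) + ε*I) ^ ((1:ℂ)/2)) + I))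
      (𝓝[>] 0) (𝓝 ((((Real.sqrt (-x) - 1)/(Real.sqrt (-x) + 1) : ℝ)) : ℂ)) := by
  have hw : Tendsto (fun ε : ℝ => ((x:ℂ) + ε*I) ^ ((1:ℂ)/2)) (𝓝[>] 0)
      (𝓝 ((Real.sqrt (-x) : ℂ) * I)) := by
    have := tendsto_zp_cpow hx ((1:ℂ)/2)
    rwa [W_plus hx] at this
  have hne : ((Real.sqrt (-x) : ℂ) * I) + I ≠ 0 := by
    intro hc
    have := congrArg Complex.im hc
    simp at this
    linarith [Real.sqrt_nonneg (-x)]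
  rw [← val_t (Real.sqrt_nonneg (-x))]
  exact (hw.sub tendsto_const_nhds).div (hw.add tendsto_const_nhds) hne

lemma tendsto_q2p (hx : x < 0) (hne1 : Real.sqrt (-x) ≠ 1) :
    Tendsto (fun ε : ℝ =>
        (-(((x:ℂ) + ε*I) ^ ((1:ℂ)/2)) - I) / (-(((x:ℂ) + ε*I) ^ ((1:ℂ)/2)) + I))
      (𝓝[>] 0) (𝓝 ((((Real.sqrt (-x) + 1)/(Real.sqrt (-x) - 1) : ℝ)) : ℂ)) := by
  have hw : Tendsto (fun ε : ℝ => ((x:ℂ) + ε*I) ^ ((1:ℂ)/2)) (𝓝[>] 0)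
      (𝓝 ((Real.sqrt (-x) : ℂ) * I)) := by
    have := tendsto_zp_cpow hx ((1:ℂ)/2)
    rwa [W_plus hx] at this
  have hne : -((Real.sqrt (-x) : ℂ) * I) + I ≠ 0 := by
    intro hc
    have := congrArg Complex.im hc
    simp at this
    exact hne1 (by linarith)
  rw [← val_s hne1]
  exact ((hw.neg).sub tendsto_const_nhds).div ((hw.neg).add tendsto_const_nhds) hne

lemma tendsto_q1m (hx : x < 0) (hne1 : Real.sqrt (-x) ≠ 1) :
    Tendsto (fun ε : ℝ => ((((x:ℂ) - ε*I) ^ ((1:ℂ)/2)) - I) / ((((x:ℂ) - ε*I) ^ ((1:ℂ)/2)) + I))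
      (𝓝[>] 0) (𝓝 ((((Real.sqrt (-x) + 1)/(Real.sqrt (-x) - 1) : ℝ)) : ℂ)) := by
  have hw : Tendsto (fun ε : ℝ => ((x:ℂ) - ε*I) ^ ((1:ℂ)/2)) (𝓝[>] 0)
      (𝓝 (-((Real.sqrt (-x) : ℂ) * I))) := by
    have := tendsto_zm_cpow hx ((1:ℂ)/2)
    rwa [W_minus hx] at this
  have hne : -((Real.sqrt (-x) : ℂ) * I) + I ≠ 0 := by
    intro hc
    have := congrArg Complex.im hc
    simp at this
    exact hne1 (by linarith)
  rw [← val_s hne1]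
  exact (hw.sub tendsto_const_nhds).div (hw.add tendsto_const_nhds) hne

lemma tendsto_q2m (hx : x < 0) :
    Tendsto (fun ε : ℝ =>
        (-(((x:ℂ) - ε*I) ^ ((1:ℂ)/2)) - I) / (-(((x:ℂ) - ε*I) ^ ((1:ℂ)/2)) + I))
      (𝓝[>] 0) (𝓝 ((((Real.sqrt (-x) - 1)/(Real.sqrt (-x) + 1) : ℝ)) : ℂ)) := by
  have hw : Tendsto (fun ε : ℝ => ((x:ℂ) - ε*I) ^ ((1:ℂ)/2)) (𝓝[>] 0)
      (𝓝 (-((Real.sqrt (-x) : ℂ) * I))) := by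
    have := tendsto_zm_cpow hx ((1:ℂ)/2)
    rwa [W_minus hx] at this
  have hne : -(-((Real.sqrt (-x) : ℂ) * I)) + I ≠ 0 := by
    intro hc
    have := congrArg Complex.im hc
    simp at this
    linarith [Real.sqrt_nonneg (-x)]
  have key := ((hw.neg).sub (tendsto_const_nhds (x := I))).div
    ((hw.neg).add (tendsto_const_nhds (x := I))) hne
  rw [neg_neg] at key
  rwa [← val_t (Real.sqrt_nonneg (-x))]

lemma im_q1p_neg : ∀ᶠ ε : ℝ in 𝓝[>] 0,
    (((((x:ℂ) + ε*I) ^ ((1:ℂ)/2)) - I) / ((((x:ℂ) + ε*I) ^ ((1:ℂ)/2)) + I)).im < 0 := by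
  filter_upwards [zp_slit (x := x)] with ε hε
  exact im_q_neg (re_sqrt_pos hε)

lemma im_q2p_pos : ∀ᶠ ε : ℝ in 𝓝[>] 0,
    0 < ((-(((x:ℂ) + ε*I) ^ ((1:ℂ)/2)) - I) / (-(((x:ℂ) + ε*I) ^ ((1:ℂ)/2)) + I)).im := by
  filter_upwards [zp_slit (x := x)] with ε hε
  apply im_q_pos
  rw [Complex.neg_re]
  linarith [re_sqrt_pos hε]

lemma im_q1m_neg : ∀ᶠ ε : ℝ in 𝓝[>] 0,
    (((((x:ℂ) - ε*I) ^ ((1:ℂ)/2)) - I) / ((((x:ℂ) - ε*I) ^ ((1:ℂ)/2)) + I)).im < 0 := by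
  filter_upwards [zm_slit (x := x)] with ε hε
  exact im_q_neg (re_sqrt_pos hε)

lemma im_q2m_pos : ∀ᶠ ε : ℝ in 𝓝[>] 0,
    0 < ((-(((x:ℂ) - ε*I) ^ ((1:ℂ)/2)) - I) / (-(((x:ℂ) - ε*I) ^ ((1:ℂ)/2)) + I)).im := by
  filter_upwards [zm_slit (x := x)] with ε hε
  apply im_q_pos
  rw [Complex.neg_re]
  linarith [re_sqrt_pos hε]

end qpaths

lemma exp_two_pi_beta {γ : ℝ} (hγ : γ ∈ Set.Ioo (0:ℝ) 1) :
    Complex.exp (2 * Real.pi * I * beta γ) = 1 - γ := by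
  have hne : (1 : ℂ) - γ ≠ 0 := by
    intro h
    have := congrArg Complex.re h
    simp at this
    have := hγ.2
    linarith
  have h2 : (2 * (Real.pi:ℂ) * I) ≠ 0 := by
    simp [Real.pi_ne_zero, Complex.I_ne_zero]
  rw [beta, mul_div_cancel₀ _ h2]
  exact Complex.exp_log hne

lemma exp_neg_half_pi_I : Complex.exp (-((Real.pi : ℂ) / 2 * I)) = -I := by
  rw [Complex.exp_neg, exp_half_pi_I, Complex.inv_I]

lemma Ap_eq_Am (x : ℝ) : Complex.exp ((Real.log (-x) + Real.pi * I) * (-(1:ℂ)/4))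
    = -I * Complex.exp ((Real.log (-x) - Real.pi * I) * (-(1:ℂ)/4)) := by
  rw [show ((Real.log (-x) : ℂ) + Real.pi * I) * (-(1:ℂ)/4)
      = ((Real.log (-x) : ℂ) - Real.pi * I) * (-(1:ℂ)/4) + -((Real.pi : ℂ)/2 * I) by ring,
    Complex.exp_add, exp_neg_half_pi_I]
  ring

lemma Bp_eq_Bm (x : ℝ) : Complex.exp ((Real.log (-x) + Real.pi * I) * ((1:ℂ)/4))
    = I * Complex.exp ((Real.log (-x) - Real.pi * I) * ((1:ℂ)/4)) := by
  rw [show ((Real.log (-x) : ℂ) + Real.pi * I) * ((1:ℂ)/4)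
      = ((Real.log (-x) : ℂ) - Real.pi * I) * ((1:ℂ)/4) + ((Real.pi : ℂ)/2 * I) by ring,
    Complex.exp_add, exp_half_pi_I]
  ring

lemma jump_case1 (γ : ℝ) (x : ℝ) (hx : x < -1) :
    ∃ Np Nm : Matrix (Fin 2) (Fin 2) ℂ,
      Tendsto (fun ε : ℝ => Nhat1 γ ((x:ℂ) + ε * Complex.I)) (𝓝[>] (0:ℝ)) (𝓝 Np) ∧
      Tendsto (fun ε : ℝ => Nhat1 γ ((x:ℂ) - ε * Complex.I)) (𝓝[>] (0:ℝ)) (𝓝 Nm) ∧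
      Np = Nm * !![0, 1; -1, 0] := by
  have hx0 : x < 0 := by linarith
  set sr := Real.sqrt (-x) with hsr_def
  have hsr : 1 < sr := by
    rw [hsr_def]
    rw [show (1:ℝ) = Real.sqrt 1 by simp]
    exact Real.sqrt_lt_sqrt (by norm_num) (by linarith)
  have hne1 : sr ≠ 1 := ne_of_gt hsr
  have ht : (0:ℝ) < (sr - 1)/(sr + 1) := by
    apply div_pos <;> linarith
  have hs : (0:ℝ) < (sr + 1)/(sr - 1) := by
    apply div_pos <;> linarith
  -- d limits
  have hD1p : Tendsto (fun ε : ℝ => d1 γ ((x:ℂ) + ε * I)) (𝓝[>] 0)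
      (𝓝 ((((sr - 1)/(sr + 1) : ℝ) : ℂ) ^ beta γ)) := by
    simp only [d1_eq]
    exact ((continuousAt_cpow_const (Or.inl (by rw [Complex.ofReal_re]; exact ht))).tendsto).comp
      (tendsto_q1p hx0)
  have hD2p : Tendsto (fun ε : ℝ => d2 γ ((x:ℂ) + ε * I)) (𝓝[>] 0)
      (𝓝 ((((sr + 1)/(sr - 1) : ℝ) : ℂ) ^ beta γ)) := by
    simp only [d2_eq]
    exact ((continuousAt_cpow_const (Or.inl (by rw [Complex.ofReal_re]; exact hs))).tendsto).comp
      (tendsto_q2p hx0 hne1)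
  have hD1m : Tendsto (fun ε : ℝ => d1 γ ((x:ℂ) - ε * I)) (𝓝[>] 0)
      (𝓝 ((((sr + 1)/(sr - 1) : ℝ) : ℂ) ^ beta γ)) := by
    simp only [d1_eq]
    exact ((continuousAt_cpow_const (Or.inl (by rw [Complex.ofReal_re]; exact hs))).tendsto).comp
      (tendsto_q1m hx0 hne1)
  have hD2m : Tendsto (fun ε : ℝ => d2 γ ((x:ℂ) - ε * I)) (𝓝[>] 0)
      (𝓝 ((((sr - 1)/(sr + 1) : ℝ) : ℂ) ^ beta γ)) := by
    simp only [d2_eq]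
    exact ((continuousAt_cpow_const (Or.inl (by rw [Complex.ofReal_re]; exact ht))).tendsto).comp
      (tendsto_q2m hx0)
  refine ⟨_, _,
    Nhat1_tendsto_entrywise (tendsto_zp_cpow hx0 _) (tendsto_zp_cpow hx0 _) hD1p hD2p,
    Nhat1_tendsto_entrywise (tendsto_zm_cpow hx0 _) (tendsto_zm_cpow hx0 _) hD1m hD2m, ?_⟩
  rw [Ap_eq_Am x, Bp_eq_Bm x]
  ext i j
  fin_cases i <;> fin_cases j <;>
    simp [Matrix.mul_apply, Fin.sum_univ_two, Matrix.smul_apply, smul_eq_mul] <;>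
    ring_nf <;> simp [Complex.I_sq] <;> ring_nf <;> tauto

lemma jump_case2 (γ : ℝ) (hγ : γ ∈ Set.Ioo (0:ℝ) 1) (x : ℝ) (hx1 : -1 < x) (hx2 : x < 0) :
    ∃ Np Nm : Matrix (Fin 2) (Fin 2) ℂ,
      Tendsto (fun ε : ℝ => Nhat1 γ ((x:ℂ) + ε * Complex.I)) (𝓝[>] (0:ℝ)) (𝓝 Np) ∧
      Tendsto (fun ε : ℝ => Nhat1 γ ((x:ℂ) - ε * Complex.I)) (𝓝[>] (0:ℝ)) (𝓝 Nm) ∧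
      Np = Nm * !![0, 1 - (γ:ℂ); ((γ:ℂ) - 1)⁻¹, 0] := by
  set sr := Real.sqrt (-x) with hsr_def
  have hsr0 : 0 < sr := Real.sqrt_pos.2 (by linarith)
  have hsr : sr < 1 := by
    rw [hsr_def, show (1:ℝ) = Real.sqrt 1 by simp]
    exact Real.sqrt_lt_sqrt (by linarith) (by linarith)
  have hne1 : sr ≠ 1 := ne_of_lt hsr
  have ht : (sr - 1)/(sr + 1) < 0 := by
    apply div_neg_of_neg_of_pos <;> linarith
  have hs : (sr + 1)/(sr - 1) < 0 := by
    apply div_neg_of_pos_of_neg <;> linarith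
  have hg1 : ((γ:ℂ) - 1) ≠ 0 := by
    intro h
    have := congrArg Complex.re h
    simp at this
    have := hγ.2
    linarith
  -- d limits
  have hD1p : Tendsto (fun ε : ℝ => d1 γ ((x:ℂ) + ε * I)) (𝓝[>] 0)
      (𝓝 (Complex.exp ((Real.log (-((sr - 1)/(sr + 1))) - Real.pi * I) * beta γ))) := by
    simp only [d1_eq]
    exact tendsto_cpow_boundary_neg ht (beta γ) (tendsto_q1p hx2) im_q1p_neg
  have hD2p : Tendsto (fun ε : ℝ => d2 γ ((x:ℂ) + ε * I)) (𝓝[>] 0)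
      (𝓝 (Complex.exp ((Real.log (-((sr + 1)/(sr - 1))) + Real.pi * I) * beta γ))) := by
    simp only [d2_eq]
    exact tendsto_cpow_boundary_pos hs (beta γ) (tendsto_q2p hx2 hne1) im_q2p_pos
  have hD1m : Tendsto (fun ε : ℝ => d1 γ ((x:ℂ) - ε * I)) (𝓝[>] 0)
      (𝓝 (Complex.exp ((Real.log (-((sr + 1)/(sr - 1))) - Real.pi * I) * beta γ))) := by
    simp only [d1_eq]
    exact tendsto_cpow_boundary_neg hs (beta γ) (tendsto_q1m hx2 hne1) im_q1m_neg
  have hD2m : Tendsto (fun ε : ℝ => d2 γ ((x:ℂ) - ε * I)) (𝓝[>] 0)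
      (𝓝 (Complex.exp ((Real.log (-((sr - 1)/(sr + 1))) + Real.pi * I) * beta γ))) := by
    simp only [d2_eq]
    exact tendsto_cpow_boundary_pos ht (beta γ) (tendsto_q2m hx2) im_q2m_pos
  refine ⟨_, _,
    Nhat1_tendsto_entrywise (tendsto_zp_cpow hx2 _) (tendsto_zp_cpow hx2 _) hD1p hD2p,
    Nhat1_tendsto_entrywise (tendsto_zm_cpow hx2 _) (tendsto_zm_cpow hx2 _) hD1m hD2m, ?_⟩
  have hrel1 : Complex.exp ((Real.log (-((sr - 1)/(sr + 1))) + Real.pi * I) * beta γ)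
      = Complex.exp ((Real.log (-((sr - 1)/(sr + 1))) - Real.pi * I) * beta γ) * (1 - γ) := by
    rw [show ((Real.log (-((sr - 1)/(sr + 1))) : ℂ) + Real.pi * I) * beta γ
        = ((Real.log (-((sr - 1)/(sr + 1))) : ℂ) - Real.pi * I) * beta γ
          + 2 * Real.pi * I * beta γ by ring,
      Complex.exp_add, exp_two_pi_beta hγ]
  have hrel2 : Complex.exp ((Real.log (-((sr + 1)/(sr - 1))) + Real.pi * I) * beta γ)
      = Complex.exp ((Real.log (-((sr + 1)/(sr - 1))) - Real.pi * I) * beta γ) * (1 - γ) := by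
    rw [show ((Real.log (-((sr + 1)/(sr - 1))) : ℂ) + Real.pi * I) * beta γ
        = ((Real.log (-((sr + 1)/(sr - 1))) : ℂ) - Real.pi * I) * beta γ
          + 2 * Real.pi * I * beta γ by ring,
      Complex.exp_add, exp_two_pi_beta hγ]
  rw [Ap_eq_Am x, Bp_eq_Bm x, hrel1, hrel2]
  ext i j
  fin_cases i <;> fin_cases j <;>
    simp [Matrix.mul_apply, Fin.sum_univ_two, Matrix.smul_apply, smul_eq_mul] <;>
    field_simp <;> ring_nf <;> simp [Complex.I_sq] <;> ring_nf

lemma logTaylor_three (v : ℂ) : Complex.logTaylor 3 v = v - v^2/2 := by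
  simp [Complex.logTaylor_succ, Complex.logTaylor_zero]
  ring

lemma log_cubic {v : ℂ} (hv : ‖v‖ ≤ 1/2) : ‖Complex.log (1+v) - (v - v^2/2)‖ ≤ ‖v‖^3 := by
  have h := Complex.norm_log_sub_logTaylor_le 2 (show ‖v‖ < 1 by linarith)
  rw [logTaylor_three] at h
  refine h.trans ?_
  have h1 : (1 - ‖v‖)⁻¹ ≤ 2 := by
    rw [inv_le_comm₀ (by linarith) (by norm_num)]
    linarith
  have h2 : (0:ℝ) ≤ ‖v‖^3 := by positivity
  have h3 : ‖v‖ ^ (2+1) * (1 - ‖v‖)⁻¹ ≤ ‖v‖^3 * 2 := by nlinarith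
  have h4 : ((2:ℕ):ℝ) + 1 = 3 := by norm_num
  rw [h4]
  linarith

lemma exp_cubic {x : ℂ} (hx : ‖x‖ ≤ 1) :
    ‖Complex.exp x - (1 + x + x^2/2)‖ ≤ ‖x‖^3 := by
  have h := Complex.exp_bound hx (n := 3) (by norm_num)
  have hsum : ∑ m ∈ Finset.range 3, x ^ m / m.factorial = 1 + x + x^2/2 := by
    rw [Finset.sum_range_succ, Finset.sum_range_succ, Finset.sum_range_one]
    norm_num [Nat.factorial]
  rw [hsum] at h
  refine h.trans ?_
  have h2 : (0:ℝ) ≤ ‖x‖^3 := by positivity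
  have h4 : ((Nat.succ 3 : ℕ) : ℝ) * (((Nat.factorial 3 : ℕ) : ℝ) * ((3:ℕ):ℝ))⁻¹ ≤ 1 := by
    norm_num [Nat.factorial]
  nlinarith

set_option maxHeartbeats 1000000 in
lemma key_bounds (γ : ℝ) {z : ℂ} (hz : z ∈ slitPlane0)
    (hbig : (8*(‖beta γ‖+1))^2 ≤ ‖z‖) :
    ‖d1 γ z + d2 γ z - 2‖ ≤ 50*‖beta γ‖^2 / ‖z‖ ∧
    ‖(z ^ ((1:ℂ)/2))⁻¹ * (d1 γ z - d2 γ z)‖ ≤ 20*‖beta γ‖ / ‖z‖ ∧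
    ‖I * z ^ ((1:ℂ)/2) * (d1 γ z - d2 γ z) - 4*beta γ‖
      ≤ (250*‖beta γ‖^3 + 60*‖beta γ‖) / ‖z‖ := by
  set B := ‖beta γ‖ with hB_def
  have hB0 : 0 ≤ B := norm_nonneg _
  set w := z ^ ((1:ℂ)/2) with hw_def
  have hz0 : z ≠ 0 := ne_zero_of_slit0 hz
  have hre : 0 < w.re := re_sqrt_pos hz
  have hwne : w ≠ 0 := by
    intro h; rw [h] at hre; simp at hre
  have hww : w * w = z := by
    rw [hw_def, ← Complex.cpow_add _ _ hz0]
    norm_num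
  have habs : ‖w‖ * ‖w‖ = ‖z‖ := by
    rw [← norm_mul, hww]
  have hM : 8*(B+1) ≤ ‖w‖ := by
    nlinarith [norm_nonneg w, norm_nonneg z]
  have hw8 : 8 ≤ ‖w‖ := by nlinarith
  have hwpos : 0 < ‖w‖ := by linarith
  have hzpos : 0 < ‖z‖ := by rw [← habs]; positivity
  -- v and its bounds
  have hwI : w + I ≠ 0 := by
    intro h
    have := congrArg Complex.re h
    simp at this; linarith
  have hwI_pos : 0 < ‖w + I‖ := norm_pos_iff.2 hwI
  set v : ℂ := -2*I/(w+I) with hv_def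
  have hwI_norm : ‖w‖ - 1 ≤ ‖w + I‖ := by
    have h0 : (w + I) + (-I) = w := by ring
    have h1 : ‖w‖ ≤ ‖w + I‖ + ‖(-I : ℂ)‖ := by
      conv_lhs => rw [← h0]
      exact norm_add_le _ _
    have h2 : ‖(-I : ℂ)‖ = 1 := by simp
    linarith [h1, h2.le]
  have hv_w : ‖v‖ * ‖w‖ ≤ 3 := by
    rw [hv_def, norm_div]
    have h1 : ‖(-2*I : ℂ)‖ = 2 := by simp
    rw [h1, div_mul_eq_mul_div, div_le_iff₀ hwI_pos]
    nlinarith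
  have hv0 : 0 ≤ ‖v‖ := norm_nonneg _
  have hv_half : ‖v‖ ≤ 1/2 := by nlinarith
  have hvne : (1:ℂ) + v ≠ 0 := by
    intro h
    have h1 : v = -1 := by linear_combination h
    rw [h1] at hv_half
    norm_num at hv_half
  -- hL = log(1+v)
  set L : ℂ := Complex.log (1+v) with hL_def
  have hL0 : 0 ≤ ‖L‖ := norm_nonneg _
  have hL_w : ‖L‖ * ‖w‖ ≤ 5 := by
    have h5 : ‖L‖ ≤ (3/2) * ‖v‖ := by
      rw [hL_def]; exact Complex.norm_log_one_add_half_le_self hv_half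
    nlinarith
  -- X = L * beta
  set X : ℂ := L * beta γ with hX_def
  have hX0 : 0 ≤ ‖X‖ := norm_nonneg _
  have hX_w : ‖X‖ * ‖w‖ ≤ 5 * B := by
    have : ‖X‖ = ‖L‖ * B := by rw [hX_def, norm_mul, hB_def]
    rw [this]
    nlinarith
  have hX_one : ‖X‖ ≤ 1 := by
    nlinarith [mul_nonneg hX0 (sub_nonneg.2 hM)]
  -- identities d1 = exp X, d2 = exp (-X)
  have hq_eq : (w - I)/(w + I) = 1 + v := by
    rw [hv_def]
    field_simp
    ring
  have hd1 : d1 γ z = Complex.exp X := by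
    rw [d1_eq, ← hw_def, hq_eq, Complex.cpow_def_of_ne_zero hvne, ← hL_def, hX_def]
  have hwmI : -w + I ≠ 0 := by
    intro hcc
    have := congrArg Complex.re hcc
    simp at this; linarith
  have hwsI : w - I ≠ 0 := by
    intro hcc
    have := congrArg Complex.re hcc
    simp at this; linarith
  have hq2_eq : (-w - I)/(-w + I) = (1 + v)⁻¹ := by
    rw [← hq_eq, inv_div, div_eq_div_iff hwmI hwsI]
    ring
  have harg : (1 + v).arg ≠ Real.pi := by
    intro hcc
    rw [Complex.arg_eq_pi_iff] at hcc
    have him : ((w - I)/(w + I)).im < 0 := im_q_neg hre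
    rw [hq_eq] at him
    rw [hcc.2] at him
    exact lt_irrefl 0 him
  have hd2 : d2 γ z = Complex.exp (-X) := by
    rw [d2_eq, ← hw_def, hq2_eq, Complex.cpow_def_of_ne_zero (inv_ne_zero hvne),
      Complex.log_inv _ harg, ← hL_def, hX_def]
    ring_nf
  -- quadratic exp bounds
  have hq1 : ‖Complex.exp X - 1 - X‖ ≤ ‖X‖^2 := by
    have := Complex.norm_exp_sub_one_sub_id_le (x := X) hX_one
    exact this
  have hq2 : ‖Complex.exp (-X) - 1 - (-X)‖ ≤ ‖X‖^2 := by
    have h0 : ‖-X‖ ≤ 1 := by rw [norm_neg]; exact hX_one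
    have h1 := Complex.norm_exp_sub_one_sub_id_le (x := -X) h0
    rw [norm_neg] at h1
    exact h1
  -- cubic exp bounds
  have hc1 : ‖Complex.exp X - (1 + X + X^2/2)‖ ≤ ‖X‖^3 := by
    have := exp_cubic (x := X) hX_one
    exact this
  have hc2 : ‖Complex.exp (-X) - (1 + (-X) + (-X)^2/2)‖ ≤ ‖X‖^3 := by
    have h0 : ‖-X‖ ≤ 1 := by rw [norm_neg]; exact hX_one
    have h1 := exp_cubic (x := -X) h0
    rw [norm_neg] at h1
    exact h1
  -- T bound
  have hT : ‖Complex.exp X - Complex.exp (-X)‖ ≤ 4 * ‖X‖ := by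
    have hid : Complex.exp X - Complex.exp (-X)
        = (Complex.exp X - 1 - X) - (Complex.exp (-X) - 1 - (-X)) + 2*X := by ring
    rw [hid]
    refine (norm_add_le _ _).trans ?_
    have h3 := (norm_sub_le (Complex.exp X - 1 - X) (Complex.exp (-X) - 1 - (-X)))
    have h4 : ‖(2:ℂ)*X‖ = 2*‖X‖ := by rw [norm_mul]; simp
    nlinarith
  -- rho bound
  have hrho : ‖(Complex.exp X - Complex.exp (-X)) - 2*X‖ ≤ 2*‖X‖^3 := by
    have hid : (Complex.exp X - Complex.exp (-X)) - 2*X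
        = (Complex.exp X - (1 + X + X^2/2)) - (Complex.exp (-X) - (1 + (-X) + (-X)^2/2)) := by
      ring
    rw [hid]
    refine (norm_sub_le _ _).trans ?_
    linarith
  refine ⟨?_, ?_, ?_⟩
  · -- S bound
    rw [hd1, hd2, le_div_iff₀ hzpos, ← habs]
    have hid : Complex.exp X + Complex.exp (-X) - 2
        = (Complex.exp X - 1 - X) + (Complex.exp (-X) - 1 - (-X)) := by ring
    rw [hid]
    have h5 := (norm_add_le (Complex.exp X - 1 - X) (Complex.exp (-X) - 1 - (-X)))
    have e1 : ‖(Complex.exp X - 1 - X) + (Complex.exp (-X) - 1 - (-X))‖ ≤ 2*‖X‖^2 := by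
      linarith
    calc ‖(Complex.exp X - 1 - X) + (Complex.exp (-X) - 1 - (-X))‖ * (‖w‖*‖w‖)
        ≤ (2*‖X‖^2) * (‖w‖*‖w‖) := mul_le_mul_of_nonneg_right e1 (by positivity)
      _ = 2*(‖X‖*‖w‖)^2 := by ring
      _ ≤ 2*(5*B)^2 := by
          have := pow_le_pow_left₀ (mul_nonneg hX0 hwpos.le) hX_w 2
          linarith
      _ = 50*B^2 := by ring
  · -- u*T bound
    rw [hd1, hd2, le_div_iff₀ hzpos, ← habs, norm_mul, norm_inv]
    rw [show ‖w‖⁻¹ * ‖Complex.exp X - Complex.exp (-X)‖ * (‖w‖*‖w‖)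
        = ‖Complex.exp X - Complex.exp (-X)‖ * ‖w‖ * (‖w‖⁻¹ * ‖w‖) by ring,
      inv_mul_cancel₀ (ne_of_gt hwpos), mul_one]
    calc ‖Complex.exp X - Complex.exp (-X)‖ * ‖w‖ ≤ (4*‖X‖) * ‖w‖ :=
          mul_le_mul_of_nonneg_right hT hwpos.le
      _ = 4*(‖X‖*‖w‖) := by ring
      _ ≤ 20*B := by linarith
  · -- Phi bound
    rw [hd1, hd2, le_div_iff₀ hzpos, ← habs]
    have hwinv : w * w⁻¹ = 1 := mul_inv_cancel₀ hwne
    have hid : I*w*(Complex.exp X - Complex.exp (-X)) - 4*beta γ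
        = I*w*((Complex.exp X - Complex.exp (-X)) - 2*X)
          + 2*beta γ*(I*w*(L + 2*I*w⁻¹)) := by
      rw [hX_def]
      linear_combination (-4*beta γ*Complex.I^2) * hwinv + (-4*beta γ) * Complex.I_sq
    rw [hid]
    have hden_ne : (1 + I*w⁻¹) ≠ 0 := by
      intro hcc
      have h7 : w + I = 0 := by
        have h8 := congrArg (fun t => t * w) hcc
        simp only [add_mul, one_mul, zero_mul] at h8
        rw [mul_assoc, inv_mul_cancel₀ hwne, mul_one] at h8
        linear_combination h8
      exact hwI h7
    have hden_norm : 7/8 ≤ ‖1 + I*w⁻¹‖ := by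
      have h8 : (1 + I*w⁻¹) * w = w + I := by
        field_simp
      have h9 : ‖1 + I*w⁻¹‖ * ‖w‖ = ‖w + I‖ := by
        rw [← norm_mul, h8]
      nlinarith [norm_nonneg (1 + I*w⁻¹)]
    have hV : v * (w+I) = -2*I := by
      rw [hv_def]; field_simp
    have hfrac : (v - v^2/2 + 2*I*w⁻¹) * (w * (w+I)^2) = -2*I := by
      linear_combination (w*(w+I) - (w/2)*(v*(w+I)+2*I) + 2*I*w) * hV
        + (2*I*(w+I)^2) * hwinv + (2*I) * Complex.I_sq
    have hLsum : L + 2*I*w⁻¹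
        = (Complex.log (1+v) - (v - v^2/2)) + (v - v^2/2 + 2*I*w⁻¹) := by
      rw [hL_def]; ring
    have hL3 : ‖L + 2*I*w⁻¹‖ * ‖w‖^3 ≤ 30 := by
      have b1 := log_cubic hv_half
      have b2 : ‖v - v^2/2 + 2*I*w⁻¹‖ * ‖w‖^3 ≤ 3 := by
        have e0 : 0 ≤ ‖v - v^2/2 + 2*I*w⁻¹‖ := norm_nonneg _
        have n1 : ‖v - v^2/2 + 2*I*w⁻¹‖ * (‖w‖ * ‖w+I‖^2) = 2 := by
          have := congrArg norm hfrac
          rw [norm_mul, norm_mul, norm_pow] at this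
          simpa using this
        have hW78 : 7/8*‖w‖ ≤ ‖w+I‖ := by linarith
        have e1 : (7/8*‖w‖)^2 ≤ ‖w+I‖^2 := pow_le_pow_left₀ (by positivity) hW78 2
        have hpos2 : 0 < ‖w+I‖^2 := by positivity
        have e2 : ‖v - v^2/2 + 2*I*w⁻¹‖ * ‖w‖^3 = 2*‖w‖^2/‖w+I‖^2 := by
          rw [eq_div_iff (ne_of_gt hpos2)]
          linear_combination (‖w‖^2) * n1
        rw [e2, div_le_iff₀ hpos2]
        nlinarith
      have b3 := norm_add_le (Complex.log (1+v) - (v - v^2/2)) (v - v^2/2 + 2*I*w⁻¹)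
      have b4 : ‖v‖^3 * ‖w‖^3 ≤ 27 := by
        have : (‖v‖*‖w‖)^3 ≤ 3^3 := pow_le_pow_left₀ (mul_nonneg hv0 hwpos.le) hv_w 3
        nlinarith
      rw [hLsum]
      have b5 : ‖Complex.log (1+v) - (v - v^2/2)‖ * ‖w‖^3 ≤ 27 := by
        have := mul_le_mul_of_nonneg_right b1 (le_of_lt (pow_pos hwpos 3))
        nlinarith
      calc ‖(Complex.log (1+v) - (v - v^2/2)) + (v - v^2/2 + 2*I*w⁻¹)‖ * ‖w‖^3
          ≤ (‖Complex.log (1+v) - (v - v^2/2)‖ + ‖v - v^2/2 + 2*I*w⁻¹‖) * ‖w‖^3 :=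
            mul_le_mul_of_nonneg_right b3 (le_of_lt (pow_pos hwpos 3))
        _ = ‖Complex.log (1+v) - (v - v^2/2)‖ * ‖w‖^3
            + ‖v - v^2/2 + 2*I*w⁻¹‖ * ‖w‖^3 := by ring
        _ ≤ 30 := by linarith
    have hnorm1 : ‖I*w*((Complex.exp X - Complex.exp (-X)) - 2*X)‖
        = ‖w‖ * ‖(Complex.exp X - Complex.exp (-X)) - 2*X‖ := by
      rw [norm_mul, norm_mul]
      simp
    have hnorm2 : ‖2*beta γ*(I*w*(L + 2*I*w⁻¹))‖ = 2*B*(‖w‖*‖L + 2*I*w⁻¹‖) := by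
      rw [norm_mul, norm_mul, norm_mul, norm_mul]
      simp only [Complex.norm_ofNat, norm_I, one_mul, ← hB_def]
    have b5 := norm_add_le (I*w*((Complex.exp X - Complex.exp (-X)) - 2*X))
      (2*beta γ*(I*w*(L + 2*I*w⁻¹)))
    rw [hnorm1, hnorm2] at b5
    have c1 : ‖(Complex.exp X - Complex.exp (-X)) - 2*X‖ * ‖w‖^3 ≤ 250*B^3 := by
      have d1 := mul_le_mul_of_nonneg_right hrho (le_of_lt (pow_pos hwpos 3))
      have d2 : (‖X‖*‖w‖)^3 ≤ (5*B)^3 := pow_le_pow_left₀ (mul_nonneg hX0 hwpos.le) hX_w 3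
      nlinarith
    calc ‖I*w*((Complex.exp X - Complex.exp (-X)) - 2*X)
          + 2*beta γ*(I*w*(L + 2*I*w⁻¹))‖ * (‖w‖*‖w‖)
        ≤ (‖w‖ * ‖(Complex.exp X - Complex.exp (-X)) - 2*X‖
            + 2*B*(‖w‖*‖L + 2*I*w⁻¹‖)) * (‖w‖*‖w‖) :=
          mul_le_mul_of_nonneg_right b5 (by positivity)
      _ = ‖(Complex.exp X - Complex.exp (-X)) - 2*X‖ * ‖w‖^3
          + 2*B*(‖L + 2*I*w⁻¹‖*‖w‖^3) := by ring
      _ ≤ 250*B^3 + 2*B*30 := by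
          have e2 : 2*B*(‖L + 2*I*w⁻¹‖*‖w‖^3) ≤ 2*B*30 :=
            mul_le_mul_of_nonneg_left hL3 (by linarith)
          linarith
      _ = 250*B^3 + 60*B := by ring

lemma Ainv : (!![1, I; I, 1] : Matrix (Fin 2) (Fin 2) ℂ)⁻¹ = !![(1:ℂ)/2, -I/2; -I/2, 1/2] := by
  apply Matrix.inv_eq_right_inv
  ext i j
  fin_cases i <;> fin_cases j <;>
    simp [Matrix.mul_apply, Fin.sum_univ_two, Matrix.one_apply] <;> ring_nf <;>
    simp [Complex.I_sq] <;> ring_nf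

set_option maxHeartbeats 1000000 in
lemma prod_entries (S a b d e u w bet : ℂ) (hS0 : S ≠ 0)
    (hab : a * b = 1) (haa : a * a = u) (hbb : b * b = w) :
    (S • ((1/S) • !![a*d, I*a*e; (I*b - 2*bet*a)*d, (b - 2*I*bet*a)*e])) *
      !![(1:ℂ)/2, -I/2; -I/2, 1/2] * Matrix.diagonal ![b, a] - 1
    = !![(d + e)/2 - 1, I/2 * u * (e - d);
        (I * w * (d - e) - 2 * bet * (d + e))/2,
        (d + e)/2 + I * bet * u * (d - e) - 1] := by
  have hsmul : (S • ((1/S) • !![a*d, I*a*e; (I*b - 2*bet*a)*d, (b - 2*I*bet*a)*e]))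
      = !![a*d, I*a*e; (I*b - 2*bet*a)*d, (b - 2*I*bet*a)*e] := by
    rw [smul_smul]
    rw [show S * (1/S) = 1 by field_simp]
    rw [one_smul]
  rw [hsmul]
  ext i j
  fin_cases i <;> fin_cases j <;>
    simp only [Matrix.mul_apply, Fin.sum_univ_two, Matrix.sub_apply, Matrix.one_apply,
      Matrix.diagonal_apply, Matrix.cons_val', Matrix.cons_val_zero, Matrix.cons_val_one,
      Matrix.head_cons, Matrix.head_fin_const, Matrix.empty_val', Matrix.cons_val_fin_one,
      Fin.zero_eta, Fin.mk_one, if_true, if_false, Fin.one_eq_zero_iff, Fin.zero_eq_one_iff,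
      ne_eq, OfNat.ofNat_ne_one, not_false_eq_true, one_ne_zero, ite_true, ite_false,
      eq_self_iff_true, Nat.succ_ne_self]
  · norm_num
    linear_combination (d/2 + e/2) * hab - (a*e*b/2)*Complex.I_sq
  · norm_num
    linear_combination (I*e/2 - I*d/2) * haa
  · norm_num
    linear_combination (I*d/2 - I*e/2)*hbb - (bet*d + bet*e)*hab + (bet*a*e*b)*Complex.I_sq
  · norm_num
    linear_combination (d/2 + e/2)*hab + (I*bet*d - I*bet*e)*haa - (b*a*d/2)*Complex.I_sq

lemma entry_eq (γ : ℝ) {z : ℂ} (hz : z ≠ 0) :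
    (Real.sqrt 2 : ℂ) • (Nhat1 γ z) * (!![1, I; I, 1])⁻¹ *
        Matrix.diagonal ![z ^ ((1:ℂ)/4), z ^ (-(1:ℂ)/4)] - 1
    = !![(d1 γ z + d2 γ z)/2 - 1,
          I/2 * (z ^ ((1:ℂ)/2))⁻¹ * (d2 γ z - d1 γ z);
        (I * (z ^ ((1:ℂ)/2)) * (d1 γ z - d2 γ z) - 2 * beta γ * (d1 γ z + d2 γ z))/2,
        (d1 γ z + d2 γ z)/2
          + I * beta γ * (z ^ ((1:ℂ)/2))⁻¹ * (d1 γ z - d2 γ z) - 1] := by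
  have hs0 : (Real.sqrt 2 : ℂ) ≠ 0 := by
    simp only [ne_eq, Complex.ofReal_eq_zero]
    positivity
  have hab : z ^ (-(1:ℂ)/4) * z ^ ((1:ℂ)/4) = 1 := by
    rw [← Complex.cpow_add _ _ hz]
    norm_num
  have haa : z ^ (-(1:ℂ)/4) * z ^ (-(1:ℂ)/4) = (z ^ ((1:ℂ)/2))⁻¹ := by
    rw [← Complex.cpow_add _ _ hz, show (-(1:ℂ)/4 + -(1:ℂ)/4) = -((1:ℂ)/2) by norm_num,
      Complex.cpow_neg]
  have hbb : z ^ ((1:ℂ)/4) * z ^ ((1:ℂ)/4) = z ^ ((1:ℂ)/2) := by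
    rw [← Complex.cpow_add _ _ hz]
    norm_num
  rw [Ainv, Nhat1_eq]
  exact prod_entries _ _ _ _ _ _ _ _ hs0 hab haa hbb

section bigO

variable (γ : ℝ)

local notation "lfil" => (Bornology.cobounded ℂ) ⊓ Filter.principal slitPlane0

lemma ev_slit : ∀ᶠ z : ℂ in lfil, z ∈ slitPlane0 :=
  (Filter.eventually_principal.2 fun _ h => h).filter_mono inf_le_right

lemma ev_big (C : ℝ) : ∀ᶠ z : ℂ in lfil, C ≤ ‖z‖ :=
  (eventually_cobounded_le_norm C).filter_mono inf_le_left

lemma ev_key : ∀ᶠ z : ℂ in lfil,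
    ‖d1 γ z + d2 γ z - 2‖ ≤ 50*‖beta γ‖^2 / ‖z‖ ∧
    ‖(z ^ ((1:ℂ)/2))⁻¹ * (d1 γ z - d2 γ z)‖ ≤ 20*‖beta γ‖ / ‖z‖ ∧
    ‖I * z ^ ((1:ℂ)/2) * (d1 γ z - d2 γ z) - 4*beta γ‖
      ≤ (250*‖beta γ‖^3 + 60*‖beta γ‖) / ‖z‖ := by
  filter_upwards [ev_slit, ev_big ((8*(‖beta γ‖+1))^2)] with z h1 h2
  exact key_bounds γ h1 h2

lemma norm_le_div_imp_bigO {f : ℂ → ℂ} {C : ℝ}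
    (h : ∀ᶠ z : ℂ in lfil, ‖f z‖ ≤ C / ‖z‖) : f =O[lfil] (fun z : ℂ => z⁻¹) := by
  rw [Asymptotics.isBigO_iff]
  refine ⟨C, ?_⟩
  filter_upwards [h] with z hz
  rwa [norm_inv, ← div_eq_mul_inv]

lemma bigO_S : (fun z : ℂ => d1 γ z + d2 γ z - 2) =O[lfil] (fun z : ℂ => z⁻¹) :=
  norm_le_div_imp_bigO ((ev_key γ).mono fun _ h => h.1)

lemma bigO_T : (fun z : ℂ => (z ^ ((1:ℂ)/2))⁻¹ * (d1 γ z - d2 γ z))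
    =O[lfil] (fun z : ℂ => z⁻¹) :=
  norm_le_div_imp_bigO ((ev_key γ).mono fun _ h => h.2.1)

lemma bigO_Phi : (fun z : ℂ => I * z ^ ((1:ℂ)/2) * (d1 γ z - d2 γ z) - 4*beta γ)
    =O[lfil] (fun z : ℂ => z⁻¹) :=
  norm_le_div_imp_bigO ((ev_key γ).mono fun _ h => h.2.2)

lemma partC (i j : Fin 2) :
    (fun z : ℂ =>
        ((Real.sqrt 2 : ℂ) • (Nhat1 γ z) * (!![1, Complex.I; Complex.I, 1])⁻¹ *
            Matrix.diagonal ![z ^ ((1:ℂ)/4), z ^ (-(1:ℂ)/4)] - 1) i j)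
      =O[lfil] (fun z : ℂ => z⁻¹) := by
  have hEq : ∀ᶠ z : ℂ in lfil,
      ((Real.sqrt 2 : ℂ) • (Nhat1 γ z) * (!![1, Complex.I; Complex.I, 1])⁻¹ *
          Matrix.diagonal ![z ^ ((1:ℂ)/4), z ^ (-(1:ℂ)/4)] - 1) i j
      = (!![(d1 γ z + d2 γ z)/2 - 1,
            I/2 * (z ^ ((1:ℂ)/2))⁻¹ * (d2 γ z - d1 γ z);
          (I * (z ^ ((1:ℂ)/2)) * (d1 γ z - d2 γ z) - 2 * beta γ * (d1 γ z + d2 γ z))/2,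
          (d1 γ z + d2 γ z)/2
            + I * beta γ * (z ^ ((1:ℂ)/2))⁻¹ * (d1 γ z - d2 γ z) - 1]) i j := by
    filter_upwards [ev_slit] with z hzs
    rw [entry_eq γ (ne_zero_of_slit0 hzs)]
  fin_cases i <;> fin_cases j
  · refine (((bigO_S γ).const_mul_left (1/2)).congr' ?_ EventuallyEq.rfl)
    filter_upwards [hEq] with z h
    rw [h]
    simp
    ring_nf
  · refine (((bigO_T γ).const_mul_left (-I/2)).congr' ?_ EventuallyEq.rfl)
    filter_upwards [hEq] with z h
    rw [h]
    simp
    ring_nf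
  · refine ((((bigO_Phi γ).const_mul_left (1/2)).add
      ((bigO_S γ).const_mul_left (-(beta γ)))).congr' ?_ EventuallyEq.rfl)
    filter_upwards [hEq] with z h
    rw [h]
    simp
    ring_nf
  · refine ((((bigO_S γ).const_mul_left (1/2)).add
      ((bigO_T γ).const_mul_left (I * beta γ))).congr' ?_ EventuallyEq.rfl)
    filter_upwards [hEq] with z h
    rw [h]
    simp
    ring_nf

end bigO


/-- (a) `N̂₁` is analytic in `ℂ ∖ (-∞,0]`; (b) jump relations on `(-∞,-1)` and `(-1,0)`;
(c) `√2 · N̂₁(z) · [[1,i],[i,1]]⁻¹ · diag(z^{1/4}, z^{-1/4}) = I + O(z⁻¹)` as `z → ∞`. -/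
theorem gap_tacnode_Nhat1_RH_problem (γ : ℝ) (hγ : γ ∈ Set.Ioo (0:ℝ) 1) :
    (∀ i j : Fin 2, AnalyticOnNhd ℂ (fun z : ℂ => Nhat1 γ z i j) slitPlane0) ∧
    (∀ x : ℝ, x < -1 →
      ∃ Np Nm : Matrix (Fin 2) (Fin 2) ℂ,
        Tendsto (fun ε : ℝ => Nhat1 γ ((x:ℂ) + ε * Complex.I)) (𝓝[>] (0:ℝ)) (𝓝 Np) ∧
        Tendsto (fun ε : ℝ => Nhat1 γ ((x:ℂ) - ε * Complex.I)) (𝓝[>] (0:ℝ)) (𝓝 Nm) ∧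
        Np = Nm * !![0, 1; -1, 0]) ∧
    (∀ x : ℝ, -1 < x → x < 0 →
      ∃ Np Nm : Matrix (Fin 2) (Fin 2) ℂ,
        Tendsto (fun ε : ℝ => Nhat1 γ ((x:ℂ) + ε * Complex.I)) (𝓝[>] (0:ℝ)) (𝓝 Np) ∧
        Tendsto (fun ε : ℝ => Nhat1 γ ((x:ℂ) - ε * Complex.I)) (𝓝[>] (0:ℝ)) (𝓝 Nm) ∧
        Np = Nm * !![0, 1 - (γ:ℂ); ((γ:ℂ) - 1)⁻¹, 0]) ∧
    (∀ i j : Fin 2,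
      (fun z : ℂ =>
          ((Real.sqrt 2 : ℂ) • (Nhat1 γ z) * (!![1, Complex.I; Complex.I, 1])⁻¹ *
              Matrix.diagonal ![z ^ ((1:ℂ)/4), z ^ (-(1:ℂ)/4)] - 1) i j)
        =O[(Bornology.cobounded ℂ) ⊓ Filter.principal slitPlane0] (fun z : ℂ => z⁻¹)) := by
  refine ⟨?_, fun x hx => jump_case1 γ x hx, fun x hx1 hx2 => jump_case2 γ hγ x hx1 hx2,
    fun i j => partC γ i j⟩
  intro i j
  fin_cases i <;> fin_cases j
  · show AnalyticOnNhd ℂ (fun z : ℂ => Nhat1 γ z 0 0) slitPlane0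
    have h1 : (fun z : ℂ => Nhat1 γ z 0 0)
        = fun z : ℂ => ((1:ℂ)/Real.sqrt 2) * (z ^ (-(1:ℂ)/4) * d1 γ z) := by
      funext z
      rw [Nhat1_eq]
      simp
    intro z hz
    rw [h1]
    exact analyticAt_const.mul ((analytic_cpow _ z hz).mul (analytic_d1 γ z hz))
  · show AnalyticOnNhd ℂ (fun z : ℂ => Nhat1 γ z 0 1) slitPlane0
    have h1 : (fun z : ℂ => Nhat1 γ z 0 1)
        = fun z : ℂ => ((1:ℂ)/Real.sqrt 2) * (I * z ^ (-(1:ℂ)/4) * d2 γ z) := by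
      funext z
      rw [Nhat1_eq]
      simp
    intro z hz
    rw [h1]
    exact analyticAt_const.mul (((analyticAt_const.mul (analytic_cpow _ z hz))).mul
      (analytic_d2 γ z hz))
  · show AnalyticOnNhd ℂ (fun z : ℂ => Nhat1 γ z 1 0) slitPlane0
    have h1 : (fun z : ℂ => Nhat1 γ z 1 0)
        = fun z : ℂ => ((1:ℂ)/Real.sqrt 2) *
            ((I * z ^ ((1:ℂ)/4) - 2 * beta γ * z ^ (-(1:ℂ)/4)) * d1 γ z) := by
      funext z
      rw [Nhat1_eq]
      simp
    intro z hz
    rw [h1]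
    exact analyticAt_const.mul
      (((analyticAt_const.mul (analytic_cpow _ z hz)).sub
        (analyticAt_const.mul (analytic_cpow _ z hz))).mul (analytic_d1 γ z hz))
  · show AnalyticOnNhd ℂ (fun z : ℂ => Nhat1 γ z 1 1) slitPlane0
    have h1 : (fun z : ℂ => Nhat1 γ z 1 1)
        = fun z : ℂ => ((1:ℂ)/Real.sqrt 2) *
            ((z ^ ((1:ℂ)/4) - 2 * I * beta γ * z ^ (-(1:ℂ)/4)) * d2 γ z) := by
      funext z
      rw [Nhat1_eq]
      simp
    intro z hz
    rw [h1]
    exact analyticAt_const.mul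
      (((analytic_cpow _ z hz).sub
        (analyticAt_const.mul (analytic_cpow _ z hz))).mul (analytic_d2 γ z hz))
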